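/- Let C be a flag code of type (t_1,...,t_r) on F_q^n with t_1 ≤ n/2 ≤ t_r, all of whose projected codes have maximum subspace distance. Let t_a = max{t_i : 2t_i ≤ n} and t_b = min{t_i : 2t_i ≥ n}. If t_b < 2t_a and |C_1| = ... = |C_a|, then C is increasing. -/

import Mathlib

noncomputable section

open Submodule

def IsFlag (q : Type*) [Field q] (n r : ℕ) (t : Fin r → ℕ)
    (F : Fin r → Submodule q (Fin n → q)) : Prop :=
  StrictMono F ∧ ∀ i, Module.finrank q ↥(F i) = t i

def proj (q : Type*) [Field q] (n r : ℕ)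
    (C : Set (Fin r → Submodule q (Fin n → q))) (i : Fin r) :
    Set (Submodule q (Fin n → q)) :=
  (fun F => F i) '' C

def IsFlagCode (q : Type*) [Field q] (n r : ℕ) (t : Fin r → ℕ)
    (C : Set (Fin r → Submodule q (Fin n → q))) : Prop :=
  C.Nonempty ∧ ∀ F ∈ C, IsFlag q n r t F

def GeneratedBy (q : Type*) [Field q] (n r : ℕ) (t : Fin r → ℕ)
    (Cs : Fin r → Set (Submodule q (Fin n → q)))
    (C : Set (Fin r → Submodule q (Fin n → q))) : Prop :=
  IsFlagCode q n r t C ∧ ∀ i, proj q n r C i = Cs i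

def IsGeneratingSet (q : Type*) [Field q] (n r : ℕ) (t : Fin r → ℕ)
    (Cs : Fin r → Set (Submodule q (Fin n → q))) : Prop :=
  ∃ C, GeneratedBy q n r t Cs C

def prodInter (q : Type*) [Field q] (n r : ℕ) (t : Fin r → ℕ)
    (Cs : Fin r → Set (Submodule q (Fin n → q))) :
    Set (Fin r → Submodule q (Fin n → q)) :=
  {F | IsFlag q n r t F ∧ ∀ i, F i ∈ Cs i}

def SIC (q : Type*) [Field q] (n r : ℕ)
    (C : Set (Fin r → Submodule q (Fin n → q))) : Prop :=
  ∀ F ∈ C, ∀ F' ∈ C, ∀ (i : ℕ) (hi : i + 1 < r),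
    F ⟨i, by omega⟩ < F' ⟨i + 1, hi⟩ →
    (fun j : Fin r => if j.val ≤ i then F j else F' j) ∈ C

def mult (q : Type*) [Field q] (n r : ℕ)
    (C : Set (Fin r → Submodule q (Fin n → q)))
    (F : Fin r → Submodule q (Fin n → q)) (i : Fin r) : ℕ :=
  Set.ncard {G ∈ C | G i = F i}

def actS (q : Type*) [Field q] (n : ℕ) (A : GL (Fin n) q)
    (U : Submodule q (Fin n → q)) : Submodule q (Fin n → q) :=
  U.map (Matrix.vecMulLinear (A : Matrix (Fin n) (Fin n) q))

def actC (q : Type*) [Field q] (n r : ℕ) (A : GL (Fin n) q)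
    (C : Set (Fin r → Submodule q (Fin n → q))) :
    Set (Fin r → Submodule q (Fin n → q)) :=
  (fun F => fun i => actS q n A (F i)) '' C

def Increasing (q : Type*) [Field q] (n r : ℕ)
    (C : Set (Fin r → Submodule q (Fin n → q))) : Prop :=
  ∀ (i : ℕ) (hi : i + 1 < r), ∀ V ∈ proj q n r C ⟨i + 1, hi⟩,
    ∃! U, U ∈ proj q n r C ⟨i, by omega⟩ ∧ U < V

def Decreasing (q : Type*) [Field q] (n r : ℕ)
    (C : Set (Fin r → Submodule q (Fin n → q))) : Prop :=
  ∀ (i : ℕ) (hi : i + 1 < r), ∀ U ∈ proj q n r C ⟨i, by omega⟩,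
    ∃! V, V ∈ proj q n r C ⟨i + 1, hi⟩ ∧ U < V

def distS (q : Type*) [Field q] (n : ℕ) (U V : Submodule q (Fin n → q)) : ℕ :=
  Module.finrank q ↥(U ⊔ V) - Module.finrank q ↥(U ⊓ V)

def maxDist (q : Type*) [Field q] (n k : ℕ)
    (D : Set (Submodule q (Fin n → q))) : Prop :=
  ∀ U ∈ D, ∀ V ∈ D, U ≠ V → distS q n U V = min (2 * k) (2 * (n - k))

lemma inf_bot_of_distS {q : Type*} [Field q] {n k : ℕ} {U V : Submodule q (Fin n → q)}
    (hU : Module.finrank q ↥U = k) (hV : Module.finrank q ↥V = k)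
    (hd : distS q n U V = 2 * k) : U ⊓ V = ⊥ := by
  have hsum := Submodule.finrank_sup_add_finrank_inf_eq U V
  have hle : Module.finrank q ↥(U ⊓ V) ≤ Module.finrank q ↥U :=
    Submodule.finrank_mono inf_le_left
  unfold distS at hd
  have h0 : Module.finrank q ↥(U ⊓ V) = 0 := by omega
  exact Submodule.finrank_eq_zero.mp h0

lemma sup_finrank_of_distS {q : Type*} [Field q] {n k : ℕ} {U V : Submodule q (Fin n → q)}
    (hU : Module.finrank q ↥U = k) (hV : Module.finrank q ↥V = k)
    (hd : distS q n U V = 2 * (n - k)) (hkn : k < n) (hnk : n ≤ 2 * k) :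
    Module.finrank q ↥(U ⊔ V) = n := by
  have hsum := Submodule.finrank_sup_add_finrank_inf_eq U V
  unfold distS at hd
  omega

theorem maxdist_increasing_of_tb_lt_two_ta
    (q : Type*) [Field q] [Fintype q] (n r : ℕ) (t : Fin r → ℕ)
    (hr : 0 < r)
    (ht : StrictMono t) (htpos : ∀ i, 0 < t i) (htn : ∀ i, t i < n)
    (C : Set (Fin r → Submodule q (Fin n → q)))
    (hC : IsFlagCode q n r t C) (hfin : C.Finite)
    (hmax : ∀ i : Fin r, maxDist q n (t i) (proj q n r C i))
    (h1 : 2 * t ⟨0, hr⟩ ≤ n) (h2 : n ≤ 2 * t ⟨r - 1, by omega⟩)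
    (a b : Fin r)
    (ha1 : 2 * t a ≤ n) (ha2 : ∀ i, 2 * t i ≤ n → t i ≤ t a)
    (hb1 : n ≤ 2 * t b) (hb2 : ∀ i, n ≤ 2 * t i → t b ≤ t i)
    (hab : t b < 2 * t a)
    (hcard : ∀ i : Fin r, i ≤ a → (proj q n r C i).ncard = (proj q n r C a).ncard) :
    Increasing q n r C := by
  intro i hi V hV
  have hi' : i < r := by omega
  set i0 : Fin r := ⟨i, hi'⟩ with hi0def
  set i1 : Fin r := ⟨i + 1, hi⟩ with hi1def
  have hi01 : i0 < i1 := by simp [hi0def, hi1def, Fin.mk_lt_mk]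
  obtain ⟨F, hF, hFV⟩ := hV
  have hFlag := hC.2 F hF
  have hVs2 : V ∈ proj q n r C i1 := ⟨F, hF, hFV⟩
  have hrV : Module.finrank q ↥V = t i1 := by rw [← hFV]; exact hFlag.2 i1
  have key : ∀ U1, (U1 ∈ proj q n r C i0 ∧ U1 < V) →
      ∀ U2, (U2 ∈ proj q n r C i0 ∧ U2 < V) → U1 = U2 := by
    rintro U1 ⟨hU1, hU1V⟩ U2 ⟨hU2, hU2V⟩
    by_contra hne
    have hrU1 : Module.finrank q ↥U1 = t i0 := by
      obtain ⟨G, hG, hGe⟩ := hU1; rw [← hGe]; exact (hC.2 G hG).2 i0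
    have hrU2 : Module.finrank q ↥U2 = t i0 := by
      obtain ⟨G, hG, hGe⟩ := hU2; rw [← hGe]; exact (hC.2 G hG).2 i0
    by_cases hcase : n ≤ 2 * t i0
    · -- level i is at or above b : two distinct subspaces span everything
      have hd := hmax i0 U1 hU1 U2 hU2 hne
      have hmin : min (2 * t i0) (2 * (n - t i0)) = 2 * (n - t i0) := by
        have := htn i0; omega
      rw [hmin] at hd
      have hsup := sup_finrank_of_distS hrU1 hrU2 hd (htn i0) hcase
      have hle : U1 ⊔ U2 ≤ V := sup_le hU1V.le hU2V.le
      have hmono := Submodule.finrank_mono (M := Fin n → q) hle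
      rw [hsup, hrV] at hmono
      exact absurd hmono (by have := htn i1; omega)
    · push_neg at hcase
      by_cases hcase2 : 2 * t i1 ≤ n
      · -- counting argument: both levels are at or below a
        have hia1 : i1 ≤ a := ht.le_iff_le.mp (ha2 i1 hcase2)
        have hia0 : i0 ≤ a := le_trans hi01.le hia1
        have hfin1 : (proj q n r C i0).Finite := hfin.image _
        have hfin2 : (proj q n r C i1).Finite := hfin.image _
        haveI := hfin1.fintype
        haveI := hfin2.fintype
        have hcards : Fintype.card ↥(proj q n r C i0) = Fintype.card ↥(proj q n r C i1) := by
          have e : (proj q n r C i0).ncard = (proj q n r C i1).ncard :=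
            (hcard i0 hia0).trans (hcard i1 hia1).symm
          rw [← Nat.card_eq_fintype_card, ← Nat.card_eq_fintype_card, Nat.card_coe_set_eq, Nat.card_coe_set_eq]; exact e
        have uniq_above : ∀ U ∈ proj q n r C i0, ∀ V1 ∈ proj q n r C i1,
            ∀ V2 ∈ proj q n r C i1, U ≤ V1 → U ≤ V2 → V1 = V2 := by
          intro U hU V1 hV1 V2 hV2 h1' h2'
          by_contra hne'
          have hd := hmax i1 V1 hV1 V2 hV2 hne'
          have hmin : min (2 * t i1) (2 * (n - t i1)) = 2 * t i1 := by
            have := htn i1; omega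
          rw [hmin] at hd
          have hrV1 : Module.finrank q ↥V1 = t i1 := by
            obtain ⟨G, hG, hGe⟩ := hV1; rw [← hGe]; exact (hC.2 G hG).2 i1
          have hrV2 : Module.finrank q ↥V2 = t i1 := by
            obtain ⟨G, hG, hGe⟩ := hV2; rw [← hGe]; exact (hC.2 G hG).2 i1
          have hbot := inf_bot_of_distS hrV1 hrV2 hd
          have hUbot : U = ⊥ := le_bot_iff.mp (hbot ▸ le_inf h1' h2')
          have hrU : Module.finrank q ↥U = t i0 := by
            obtain ⟨G, hG, hGe⟩ := hU; rw [← hGe]; exact (hC.2 G hG).2 i0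
          rw [hUbot, finrank_bot] at hrU
          have := htpos i0; omega
        have exists_above : ∀ U ∈ proj q n r C i0, ∃ V' ∈ proj q n r C i1, U ≤ V' := by
          rintro U ⟨G, hG, hGe⟩
          exact ⟨G i1, ⟨G, hG, rfl⟩, hGe ▸ ((hC.2 G hG).1 hi01).le⟩
        choose gv hgv1 hgv2 using exists_above
        set g : ↥(proj q n r C i0) → ↥(proj q n r C i1) :=
          fun u => ⟨gv u.1 u.2, hgv1 u.1 u.2⟩ with hgdef
        have gsurj : Function.Surjective g := by
          rintro ⟨V', hV'⟩
          obtain ⟨G, hG, hGe⟩ := hV'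
          have hU : G i0 ∈ proj q n r C i0 := ⟨G, hG, rfl⟩
          refine ⟨⟨G i0, hU⟩, Subtype.ext ?_⟩
          exact uniq_above (G i0) hU _ (hgv1 _ hU) V' ⟨G, hG, hGe⟩ (hgv2 _ hU)
            (hGe ▸ ((hC.2 G hG).1 hi01).le)
        have ginj : Function.Injective g :=
          ((Fintype.bijective_iff_surjective_and_card g).mpr ⟨gsurj, hcards⟩).1
        have e1 : (g ⟨U1, hU1⟩ : Submodule q (Fin n → q)) = V :=
          uniq_above U1 hU1 _ (hgv1 _ hU1) V hVs2 (hgv2 _ hU1) hU1V.le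
        have e2 : (g ⟨U2, hU2⟩ : Submodule q (Fin n → q)) = V :=
          uniq_above U2 hU2 _ (hgv1 _ hU2) V hVs2 (hgv2 _ hU2) hU2V.le
        exact hne (congrArg Subtype.val (ginj (Subtype.ext (e1.trans e2.symm))))
      · -- impossible index configuration
        push_neg at hcase2
        have hd := hmax i0 U1 hU1 U2 hU2 hne
        have hmin : min (2 * t i0) (2 * (n - t i0)) = 2 * t i0 := by
          have := htn i0; omega
        rw [hmin] at hd
        have hbot := inf_bot_of_distS hrU1 hrU2 hd
        have hsum := Submodule.finrank_sup_add_finrank_inf_eq U1 U2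
        rw [hbot, finrank_bot, hrU1, hrU2] at hsum
        have hle : U1 ⊔ U2 ≤ V := sup_le hU1V.le hU2V.le
        have hmono := Submodule.finrank_mono (M := Fin n → q) hle
        rw [hrV] at hmono
        have h2t : 2 * t i0 ≤ t i1 := by omega
        -- i1 = b
        have hbi1 : b ≤ i1 := ht.le_iff_le.mp (hb2 i1 (by omega))
        have hi0b : i0 < b := by
          by_contra hx
          push_neg at hx
          have : t b ≤ t i0 := ht.le_iff_le.mpr hx
          omega
        have hi1b : i1 ≤ b := by
          rw [Fin.le_def]; rw [Fin.lt_def] at hi0b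
          simpa [hi0def, hi1def] using hi0b
        have htib : t i1 = t b := by rw [le_antisymm hi1b hbi1]
        have hia0 : i0 ≤ a := ht.le_iff_le.mp (ha2 i0 (by omega))
        have hi0a : i0 < a := ht.lt_iff_lt.mp (by omega)
        have hi1a : i1 ≤ a := by
          rw [Fin.le_def]; rw [Fin.lt_def] at hi0a
          simpa [hi0def, hi1def] using hi0a
        have : t i1 ≤ t a := ht.le_iff_le.mpr hi1a
        omega
  refine ⟨F i0, ⟨⟨F, hF, rfl⟩, ?_⟩, ?_⟩
  · rw [← hFV]; exact hFlag.1 hi01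
  · intro y hy
    exact key y hy (F i0) ⟨⟨F, hF, rfl⟩, by rw [← hFV]; exact hFlag.1 hi01⟩
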